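/- Let M ≥ 1 and let (a_k)_{k=1}^M, (b_k)_{k=1}^M, ā be nonnegative reals and (α_k)_{k=1}^M nonnegative reals with Σ α_k = 1, satisfying: 2α_1 = 3ā + 2a_1; 2α_k = 2a_k + b_{k-1} for 2 ≤ k ≤ M; α_k = a_k + 2b_k for 1 ≤ k ≤ M; and b_k = 0 for k > M (interpreting b as extended by zero). Then b_k = 0 for all k, a_k = α_k for all k, and ā = 0. -/

import Mathlib

/- Indices are honest positive integers (values at index 0 irrelevant). Following
the paper, the sequences a, b, α are extended by zero beyond M, and the marginal
equations hold for all k in the indicated ranges (as they do for the extended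
plans: for k > M all terms vanish). -/

theorem stmt4 (M : ℕ) (hM : 1 ≤ M) (a b α : ℕ → ℝ) (abar : ℝ)
    (ha : ∀ k, 1 ≤ k → 0 ≤ a k)
    (hb : ∀ k, 1 ≤ k → 0 ≤ b k)
    (habar : 0 ≤ abar)
    (hα : ∀ k, 1 ≤ k → 0 ≤ α k)
    (hαsum : ∑ k ∈ Finset.Icc 1 M, α k = 1)
    (hext : ∀ k, M < k → a k = 0 ∧ α k = 0 ∧ b k = 0)
    (heq1 : 2 * α 1 = 3 * abar + 2 * a 1)
    (heqk : ∀ k, 2 ≤ k → 2 * α k = 2 * a k + b (k - 1))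
    (heqk' : ∀ k, 1 ≤ k → α k = a k + 2 * b k) :
    (∀ k, 1 ≤ k → b k = 0) ∧ (∀ k, 1 ≤ k → a k = α k) ∧ abar = 0 := by
  have key : ∀ k, 1 ≤ k → b k = 4 * b (k + 1) := by
    intro k hk
    have h1 := heqk (k + 1) (by omega)
    have h2 := heqk' (k + 1) (by omega)
    rw [Nat.add_sub_cancel] at h1
    linarith
  have gen : ∀ n, ∀ k, 1 ≤ k → b k = 4 ^ n * b (k + n) := by
    intro n
    induction n with
    | zero => intro k hk; simp
    | succ n ih =>
      intro k hk
      have h1 := key k hk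
      have h2 := ih (k + 1) (by omega)
      have : k + 1 + n = k + (n + 1) := by omega
      rw [this] at h2
      rw [h1, h2]; ring
  have hb0 : ∀ k, 1 ≤ k → b k = 0 := by
    intro k hk
    have h := gen M k hk
    have hz : b (k + M) = 0 := (hext (k + M) (by omega)).2.2
    rw [hz, mul_zero] at h
    exact h
  refine ⟨hb0, ?_, ?_⟩
  · intro k hk
    have := heqk' k hk
    rw [hb0 k hk] at this
    linarith
  · have h1 := heqk' 1 le_rfl
    rw [hb0 1 le_rfl] at h1
    linarith
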